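/- For every n ≥ 1, the difference between S_∞ = Σ_{j=1}^∞ 1/x_j and the even-indexed convergent p_{2n}/q_{2n} is the tail of the series: S_∞ − p_{2n}/q_{2n} = Σ_{j=n+2}^∞ 1/x_j; moreover, for every ε with 0 < ε < 1/2 there exists N such that for all n ≥ N one has 0 < S_∞ − p_{2n}/q_{2n} < 1/q_{2n}^{5/2−ε}. -/

import Mathlib

open Polynomial Finset

/-- for every `n ≥ 1`, the difference between `S_∞ = ∑_{j=1}^∞ 1 / x j` and
the even-indexed convergent `p_{2n} / q_{2n}` is the tail of the series:
`S_∞ - p_{2n} / q_{2n} = ∑_{j=n+2}^∞ 1 / x j`; moreover, for every `ε` with `0 < ε < 1/2`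
there exists `N` such that for all `n ≥ N` one has
`0 < S_∞ - p_{2n} / q_{2n} < 1 / q_{2n} ^ (5/2 - ε)`.  Here `p`, `q` are indexed with a
shift, so that `p (m+1) / q (m+1)` is the `m`-th convergent, with `p 0 = p_{-1} = 1` and
`q 0 = q_{-1} = 0`. -/
theorem stmt_13 (F : Polynomial ℤ)
    (hFnonneg : ∀ i, 0 ≤ F.coeff i) (hF0 : F.coeff 0 = 1) (hFdeg : 1 ≤ F.natDegree)
    (x : ℕ → ℚ) (hxpos : ∀ n, 0 < x n) (hx0 : x 0 = 1) (hx1 : x 1 = 1)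
    (hrec : ∀ n, x (n + 2) * x n = (x (n + 1)) ^ 2 * Polynomial.aeval (x (n + 1)) F)
    (a : ℕ → ℚ)
    (haeven : ∀ n, a (2 * n) = x n)
    (haodd : ∀ n, a (2 * n + 1) = (Polynomial.aeval (x (n + 1)) F - 1) / x n)
    (p q : ℕ → ℚ)
    (hp0 : p 0 = 1) (hp1 : p 1 = a 0) (hq0 : q 0 = 0) (hq1 : q 1 = 1)
    (hp : ∀ n, p (n + 2) = a (n + 1) * p (n + 1) + p n)
    (hq : ∀ n, q (n + 2) = a (n + 1) * q (n + 1) + q n) :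
    (∀ n : ℕ, 1 ≤ n →
      (∑' j : ℕ, (1 : ℝ) / (x (j + 1) : ℝ)) - (p (2 * n + 1) : ℝ) / (q (2 * n + 1) : ℝ)
        = ∑' j : ℕ, (1 : ℝ) / (x (j + n + 2) : ℝ)) ∧
    (∀ ε : ℝ, 0 < ε → ε < 1 / 2 → ∃ N : ℕ, ∀ n : ℕ, N ≤ n →
      0 < (∑' j : ℕ, (1 : ℝ) / (x (j + 1) : ℝ)) - (p (2 * n + 1) : ℝ) / (q (2 * n + 1) : ℝ) ∧
      (∑' j : ℕ, (1 : ℝ) / (x (j + 1) : ℝ)) - (p (2 * n + 1) : ℝ) / (q (2 * n + 1) : ℝ)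
        < 1 / (q (2 * n + 1) : ℝ) ^ ((5 : ℝ) / 2 - ε)) := by
  have hF1 : ∀ t : ℚ, 1 ≤ t → 1 + t ≤ Polynomial.aeval t F := by
    intro t ht
    have ht0 : (0:ℚ) < t := lt_of_lt_of_le one_pos ht
    have hFne : F ≠ 0 := fun h => by simp [h] at hF0
    have hld : 1 ≤ F.coeff F.natDegree := by
      have h1 : F.coeff F.natDegree ≠ 0 := by
        rw [← Polynomial.leadingCoeff]
        exact Polynomial.leadingCoeff_ne_zero.mpr hFne
      have := hFnonneg F.natDegree
      omega
    have hdne : F.natDegree ≠ 0 := by omega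
    rw [Polynomial.aeval_eq_sum_range]
    have hsub : ({0, F.natDegree} : Finset ℕ) ⊆ Finset.range (F.natDegree + 1) := by
      intro i hi
      simp only [Finset.mem_insert, Finset.mem_singleton] at hi
      rcases hi with rfl | rfl <;> simp [Finset.mem_range] <;> omega
    have hkey : ∑ i ∈ ({0, F.natDegree} : Finset ℕ), F.coeff i • t ^ i
        ≤ ∑ i ∈ Finset.range (F.natDegree + 1), F.coeff i • t ^ i := by
      apply Finset.sum_le_sum_of_subset_of_nonneg hsub
      intro i _ _
      have := hFnonneg i
      have : (0:ℚ) ≤ (F.coeff i : ℚ) := by exact_mod_cast this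
      have ht' : (0:ℚ) ≤ t ^ i := by positivity
      simpa [zsmul_eq_mul] using mul_nonneg this ht'
    refine le_trans ?_ hkey
    rw [Finset.sum_pair hdne.symm]
    simp only [zsmul_eq_mul, hF0, pow_zero]
    have h1 : (1:ℚ) ≤ (F.coeff F.natDegree : ℚ) := by exact_mod_cast hld
    have h2 : t ≤ t ^ F.natDegree := by
      calc t = t ^ 1 := (pow_one t).symm
      _ ≤ t ^ F.natDegree := pow_le_pow_right₀ ht hFdeg
    push_cast
    nlinarith [pow_pos ht0 F.natDegree]
  have hbase : ∀ n, 1 ≤ x n ∧ x n ≤ x (n + 1) := by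
    intro n
    induction n with
    | zero => exact ⟨by rw [hx0], by rw [hx0, hx1]⟩
    | succ m ih =>
      obtain ⟨h1, h2⟩ := ih
      have h1' : 1 ≤ x (m + 1) := le_trans h1 h2
      refine ⟨h1', ?_⟩
      have hA := hF1 (x (m + 1)) h1'
      have hr := hrec m
      have hxm := hxpos m
      have hxm1 := hxpos (m + 1)
      nlinarith [sq_nonneg (x (m+1)), mul_pos hxm1 hxm1]
  have hone : ∀ n, 1 ≤ x n := fun n => (hbase n).1
  have hmono : ∀ n, x n ≤ x (n + 1) := fun n => (hbase n).2
  have hgrow : ∀ n, 2 * x (n + 1) ≤ x (n + 2) := by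
    intro n
    have hA := hF1 (x (n + 1)) (hone (n + 1))
    have hr := hrec n
    nlinarith [hxpos n, hxpos (n + 1), hmono n, hone (n + 1)]
  have hsq : ∀ n, x (n + 1) ^ 2 ≤ x (n + 2) := by
    intro n
    have hA := hF1 (x (n + 1)) (hone (n + 1))
    have hr := hrec n
    nlinarith [hxpos n, hxpos (n + 1), hmono n, hone (n + 1), hone n]
  have hcube : ∀ n, x (n + 1) ^ 3 ≤ x (n + 2) * x n := by
    intro n
    have hA := hF1 (x (n + 1)) (hone (n + 1))
    have hr := hrec n
    nlinarith [hxpos n, hxpos (n + 1), hone (n + 1)]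
  have hpow : ∀ m k, x (m + 1) * 2 ^ k ≤ x (m + 1 + k) := by
    intro m k
    induction k with
    | zero => simp
    | succ j ih =>
      have := hgrow (m + j)
      calc x (m + 1) * 2 ^ (j + 1) = 2 * (x (m + 1) * 2 ^ j) := by ring
      _ ≤ 2 * x (m + 1 + j) := by linarith [hxpos (m+1+j)]
      _ ≤ x (m + 1 + (j + 1)) := by
          have : m + 1 + (j + 1) = m + j + 2 := by omega
          rw [this]
          have : m + 1 + j = m + j + 1 := by omega
          rw [this] at *
          linarith [hgrow (m + j)]
  have hxne : ∀ n, x n ≠ 0 := fun n => (hxpos n).ne'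
  set S : ℕ → ℚ := fun m => ∑ j ∈ Finset.range m, 1 / x (j + 1) with hS
  have hSsucc : ∀ m, S (m + 1) = S m + 1 / x (m + 1) := by
    intro m; simp [hS, Finset.sum_range_succ]
  have key : ∀ n, q (2 * n + 1) = x (n + 1) ∧ q (2 * n + 2) = x (n + 2) / x (n + 1) - 1
      ∧ p (2 * n + 1) = x (n + 1) * S (n + 1)
      ∧ p (2 * n + 2) = x (n + 2) / x (n + 1) * S (n + 2) - S (n + 1) := by
    intro n
    induction n with
    | zero =>
      have hx2 : x 2 = Polynomial.aeval (x 1) F := by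
        have h : x 2 * x 0 = x 1 ^ 2 * Polynomial.aeval (x 1) F := hrec 0
        rw [hx0, hx1] at h; rw [hx1]; linarith
      have ha1 : a 1 = x 2 - 1 := by
        have := haodd 0; rw [hx0] at this; simpa [hx2] using this
      have ha0 : a 0 = x 0 := haeven 0
      have hS1 : S 1 = 1 := by simp [hS, hx1]
      have hS2 : S 2 = 1 + 1 / x 2 := by
        rw [show (2:ℕ) = 1 + 1 from rfl, hSsucc, hS1]
      have e2 : q 2 = a 1 * q 1 + q 0 := hq 0
      have e2p : p 2 = a 1 * p 1 + p 0 := hp 0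
      refine ⟨by rw [hq1, hx1], ?_, ?_, ?_⟩
      · rw [e2, ha1, hq1, hq0, hx1]; ring
      · rw [hp1, ha0, hx0, hx1, hS1]; ring
      · rw [e2p, ha1, hp1, ha0, hp0, hx0, hx1, hS2, hS1]
        field_simp [hxne]
        ring
    | succ m ih =>
      obtain ⟨iq1, iq2, ip1, ip2⟩ := ih
      have hr : x (m + 3) * x (m + 1) = x (m + 2) ^ 2 * Polynomial.aeval (x (m + 2)) F :=
        hrec (m + 1)
      have ea : a (2 * m + 2) = x (m + 1) := haeven (m + 1)
      have eb : a (2 * m + 3) = (Polynomial.aeval (x (m + 2)) F - 1) / x (m + 1) :=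
        haodd (m + 1)
      have hS2' : S (m + 2) = S (m + 1) + 1 / x (m + 2) := hSsucc (m + 1)
      have hS3' : S (m + 3) = S (m + 2) + 1 / x (m + 3) := hSsucc (m + 2)
      have eq3 : q (2 * m + 3) = a (2 * m + 2) * q (2 * m + 2) + q (2 * m + 1) := hq (2 * m + 1)
      have eq4 : q (2 * m + 4) = a (2 * m + 3) * q (2 * m + 3) + q (2 * m + 2) := hq (2 * m + 2)
      have ep3 : p (2 * m + 3) = a (2 * m + 2) * p (2 * m + 2) + p (2 * m + 1) := hp (2 * m + 1)
      have ep4 : p (2 * m + 4) = a (2 * m + 3) * p (2 * m + 3) + p (2 * m + 2) := hp (2 * m + 2)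
      have h3 : q (2 * m + 3) = x (m + 2) := by
        rw [eq3, ea, iq1, iq2]; field_simp [hxne]; ring
      have h3p : p (2 * m + 3) = x (m + 2) * S (m + 2) := by
        rw [ep3, ea, ip1, ip2]
        field_simp [hxne]
        ring
      refine ⟨h3, ?_, h3p, ?_⟩
      · show q (2 * m + 4) = x (m + 3) / x (m + 2) - 1
        rw [eq4, eb, h3, iq2]
        field_simp [hxne]
        linear_combination -hr
      · show p (2 * m + 4) = x (m + 3) / x (m + 2) * S (m + 3) - S (m + 2)
        rw [ep4, eb, h3p, ip2, hS3', hS2']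
        field_simp [hxne]
        linear_combination (-(S (m+1) * x (m+2) + 1)) * hr
  have hq' : ∀ n, q (2 * n + 1) = x (n + 1) := fun n => (key n).1
  have hp' : ∀ n, p (2 * n + 1) = x (n + 1) * (∑ j ∈ Finset.range (n + 1), 1 / x (j + 1)) :=
    fun n => (key n).2.2.1
  have hxposR : ∀ n, (0:ℝ) < (x n : ℝ) := fun n => by exact_mod_cast hxpos n
  have hxneR : ∀ n, ((x n : ℝ)) ≠ 0 := fun n => (hxposR n).ne'
  set f : ℕ → ℝ := fun j => 1 / (x (j + 1) : ℝ) with hf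
  have hfpos : ∀ j, 0 < f j := fun j => by
    have := hxposR (j + 1); simp only [hf]; positivity
  have hfle : ∀ j, f j ≤ (1 / 2) ^ j := by
    intro j
    have h : (1:ℚ) * 2 ^ j ≤ x (j + 1) := by
      rw [← hx1]
      rw [show j + 1 = 0 + 1 + j from by omega]
      exact hpow 0 j
    have h2R : (2:ℝ) ^ j ≤ (x (j + 1) : ℝ) := by
      rw [one_mul] at h; exact_mod_cast h
    have hp2 : (0:ℝ) < 2 ^ j := by positivity
    calc f j = 1 / (x (j + 1) : ℝ) := rfl
    _ ≤ 1 / (2:ℝ) ^ j := one_div_le_one_div_of_le hp2 h2R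
    _ = (1 / 2) ^ j := by rw [one_div_pow]
  have hfsum : Summable f :=
    Summable.of_nonneg_of_le (fun j => (hfpos j).le) hfle summable_geometric_two
  have hconv : ∀ n : ℕ, (p (2 * n + 1) : ℝ) / (q (2 * n + 1) : ℝ)
      = ∑ j ∈ Finset.range (n + 1), f j := by
    intro n
    rw [hp' n, hq' n]
    push_cast
    rw [mul_comm, mul_div_assoc, div_self (hxneR (n + 1)), mul_one]
  have part1 : ∀ n : ℕ,
      (∑' j : ℕ, (1 : ℝ) / (x (j + 1) : ℝ)) - (p (2 * n + 1) : ℝ) / (q (2 * n + 1) : ℝ)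
        = ∑' j : ℕ, (1 : ℝ) / (x (j + n + 2) : ℝ) := by
    intro n
    have h := Summable.sum_add_tsum_nat_add (f := f) (n + 1) hfsum
    rw [hconv n]
    have e : (∑' j : ℕ, (1 : ℝ) / (x (j + n + 2) : ℝ)) = ∑' i : ℕ, f (i + (n + 1)) := rfl
    rw [e]
    have e2 : (∑' j : ℕ, (1 : ℝ) / (x (j + 1) : ℝ)) = ∑' j, f j := rfl
    rw [e2]
    linarith [h]
  refine ⟨fun n _ => part1 n, ?_⟩
  intro ε hε hε2
  refine ⟨max (⌈1 / ε⌉₊ + 1) 1, fun n hn => ?_⟩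
  have hn1 : 1 ≤ n := le_trans (le_max_right _ _) hn
  have hnN : ⌈1 / ε⌉₊ + 1 ≤ n := le_trans (le_max_left _ _) hn
  rw [part1 n, hq' n]
  have hgsum : Summable (fun j => (1:ℝ) / (x (j + n + 2) : ℝ)) :=
    (summable_nat_add_iff (f := f) (n + 1)).2 hfsum
  constructor
  · refine Summable.tsum_pos hgsum (fun j => ?_) 0 ?_
    · have := hxposR (j + n + 2); positivity
    · have := hxposR (0 + n + 2); positivity
  -- upper bound
  set Q : ℝ := (x (n + 1) : ℝ) with hQ
  have hQpos : 0 < Q := hxposR (n + 1)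
  have htail : (∑' j : ℕ, (1:ℝ) / (x (j + n + 2) : ℝ)) ≤ 2 / (x (n + 2) : ℝ) := by
    have hterm : ∀ j, (1:ℝ) / (x (j + n + 2) : ℝ) ≤ (1 / (x (n + 2) : ℝ)) * (1 / 2) ^ j := by
      intro j
      have h := hpow (n + 1) j
      rw [show n + 1 + 1 + j = j + n + 2 from by omega] at h
      have hR : (x (n + 2) : ℝ) * 2 ^ j ≤ (x (j + n + 2) : ℝ) := by exact_mod_cast h
      have hpos : (0:ℝ) < (x (n + 2) : ℝ) * 2 ^ j := by
        have := hxposR (n + 2); positivity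
      calc (1:ℝ) / (x (j + n + 2) : ℝ) ≤ 1 / ((x (n + 2) : ℝ) * 2 ^ j) :=
            one_div_le_one_div_of_le hpos hR
      _ = (1 / (x (n + 2) : ℝ)) * (1 / 2) ^ j := by
            rw [one_div_pow, div_mul_div_comm, one_mul]
    have hgeo : Summable (fun j : ℕ => (1 / (x (n + 2) : ℝ)) * (1 / 2) ^ j) :=
      summable_geometric_two.mul_left _
    calc (∑' j : ℕ, (1:ℝ) / (x (j + n + 2) : ℝ))
        ≤ ∑' j : ℕ, (1 / (x (n + 2) : ℝ)) * (1 / 2) ^ j := Summable.tsum_le_tsum hterm hgsum hgeo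
    _ = (1 / (x (n + 2) : ℝ)) * 2 := by rw [tsum_mul_left, tsum_geometric_two]
    _ = 2 / (x (n + 2) : ℝ) := by ring
  -- rpow estimates
  obtain ⟨m, rfl⟩ : ∃ m, n = m + 1 := ⟨n - 1, by omega⟩
  have hPQ : ((x (m + 1) : ℝ)) ^ 2 ≤ Q := by rw [hQ]; exact_mod_cast hsq m
  have hPle : (x (m + 1) : ℝ) ≤ Q ^ ((1:ℝ)/2) := by
    have h0 : (0:ℝ) ≤ (x (m + 1) : ℝ) := (hxposR (m + 1)).le
    have h := Real.rpow_le_rpow (by positivity) hPQ (by norm_num : (0:ℝ) ≤ 1/2)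
    calc (x (m + 1) : ℝ) = (((x (m + 1) : ℝ)) ^ (2:ℕ)) ^ ((1:ℝ)/2) := by
          rw [← Real.rpow_natCast (x (m + 1) : ℝ) 2, ← Real.rpow_mul h0]
          norm_num
    _ ≤ Q ^ ((1:ℝ)/2) := h
  have hcubeR : Q ^ (3:ℕ) ≤ (x (m + 1 + 2) : ℝ) * (x (m + 1) : ℝ) := by
    rw [hQ]; exact_mod_cast hcube (m + 1)
  have h52 : Q ^ ((5:ℝ)/2) ≤ (x (m + 1 + 2) : ℝ) := by
    have e : Q ^ ((5:ℝ)/2) * Q ^ ((1:ℝ)/2) = Q ^ (3:ℕ) := by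
      rw [← Real.rpow_add hQpos, ← Real.rpow_natCast Q 3]
      norm_num
    have step : Q ^ ((5:ℝ)/2) * Q ^ ((1:ℝ)/2) ≤ (x (m + 1 + 2) : ℝ) * Q ^ ((1:ℝ)/2) := by
      rw [e]
      calc Q ^ (3:ℕ) ≤ (x (m + 1 + 2) : ℝ) * (x (m + 1) : ℝ) := hcubeR
      _ ≤ (x (m + 1 + 2) : ℝ) * Q ^ ((1:ℝ)/2) :=
          mul_le_mul_of_nonneg_left hPle (hxposR (m + 1 + 2)).le
    exact le_of_mul_le_mul_right step (Real.rpow_pos_of_pos hQpos _)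
  have h2Q : (2:ℝ) ^ (m + 1 : ℕ) ≤ Q := by
    have h : (1:ℚ) * 2 ^ (m + 1) ≤ x (m + 1 + 1) := by
      rw [← hx1, show m + 1 + 1 = 0 + 1 + (m + 1) from by omega]
      exact hpow 0 (m + 1)
    rw [one_mul] at h
    rw [hQ]; exact_mod_cast h
  have hQeps : (2:ℝ) < Q ^ ε := by
    have hceil : (1:ℝ)/ε < ((m + 1 : ℕ) : ℝ) := by
      have h1 : (1:ℝ)/ε ≤ (⌈1/ε⌉₊ : ℝ) := Nat.le_ceil _
      have h2 : (⌈1/ε⌉₊ : ℝ) < ((m + 1 : ℕ) : ℝ) := by exact_mod_cast hnN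
      linarith
    have h1n : 1 < ((m + 1 : ℕ) : ℝ) * ε := by
      rw [div_lt_iff₀ hε] at hceil; linarith
    calc (2:ℝ) = 2 ^ (1:ℝ) := (Real.rpow_one 2).symm
    _ < 2 ^ (((m + 1 : ℕ) : ℝ) * ε) := by
        exact (Real.rpow_lt_rpow_left_iff one_lt_two).mpr h1n
    _ = ((2:ℝ) ^ (m + 1 : ℕ)) ^ ε := by
        rw [← Real.rpow_natCast 2 (m + 1), ← Real.rpow_mul (by norm_num)]
    _ ≤ Q ^ ε := Real.rpow_le_rpow (by positivity) h2Q hε.le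
  have hfin : 2 / (x (m + 1 + 2) : ℝ) < 1 / Q ^ ((5:ℝ)/2 - ε) := by
    have hD : (0:ℝ) < Q ^ ((5:ℝ)/2) := Real.rpow_pos_of_pos hQpos _
    have s1 : 2 / (x (m + 1 + 2) : ℝ) ≤ 2 / Q ^ ((5:ℝ)/2) :=
      div_le_div_of_nonneg_left (by norm_num) hD h52
    have s2 : 2 / Q ^ ((5:ℝ)/2) < Q ^ ε / Q ^ ((5:ℝ)/2) := by
      rw [div_lt_div_iff₀ hD hD]
      nlinarith [hD, hQeps]
    have s3 : Q ^ ε / Q ^ ((5:ℝ)/2) = 1 / Q ^ ((5:ℝ)/2 - ε) := by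
      rw [Real.rpow_sub hQpos, one_div_div]
    linarith
  calc (∑' j : ℕ, (1:ℝ) / (x (j + (m + 1) + 2) : ℝ)) ≤ 2 / (x (m + 1 + 2) : ℝ) := htail
  _ < 1 / Q ^ ((5:ℝ)/2 - ε) := hfin
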